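/- Suppose there exists a super-simple Room frame of type 2^t. Then there exists an optimal (2t,5,[2,1,1])_4-code of size 2t(t−1), which equals the upper bound 2t·⌊(2t−1)/2⌋. -/

import Mathlib

open Finset

/-- `u` has composition `w̄`: for each nonzero symbol `j`, exactly `w j` coordinates equal `j`. -/
def HasComposition {q : ℕ} {X : Type*} [Fintype X] [DecidableEq X]
    (w : ZMod q → ℕ) (u : X → ZMod q) : Prop :=
  ∀ j : ZMod q, j ≠ 0 → (Finset.univ.filter fun x => u x = j).card = w j

/-- A constant-composition code with composition `w̄` and minimum distance `d`. -/
def IsCCCode (q d : ℕ) (w : ZMod q → ℕ) {X : Type*} [Fintype X] [DecidableEq X]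
    (C : Finset (X → ZMod q)) : Prop :=
  (∀ u ∈ C, HasComposition w u) ∧
  ∀ u ∈ C, ∀ v ∈ C, u ≠ v → d ≤ hammingDist u v

/-- `A_q(n,d,w̄)`: the maximum size of an `(n,d,w̄)_q` constant-composition code. -/
noncomputable def maxCCC (q n d : ℕ) (w : ZMod q → ℕ) : ℕ :=
  sSup {s | ∃ C : Finset (Fin n → ZMod q), IsCCCode q d w C ∧ C.card = s}

/-- The composition `[2,1,1]` for quaternary codes: two 1's, one 2, one 3. -/
def w211 : ZMod 4 → ℕ :=
  fun j => if j = 1 then 2 else if j = 2 then 1 else if j = 3 then 1 else 0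

/-- A Room frame of type `2^t` on the symbol set `Fin (2t)`, whose holes are the
pairs `Sᵢ = {2i, 2i+1}` (the hole of `x` is `x/2`).  Cells are empty or contain an
unordered pair of symbols from distinct holes; the subarrays `Sᵢ × Sᵢ` are empty;
each symbol `x` outside the hole of `s` occurs exactly once in row `s` and once in
column `s`; every pair of symbols from distinct holes occurs in exactly one cell. -/
structure RoomFrame2 (t : ℕ) where
  cell : Fin (2 * t) → Fin (2 * t) → Option (Sym2 (Fin (2 * t)))
  hole_empty : ∀ r c : Fin (2 * t), (r : ℕ) / 2 = (c : ℕ) / 2 → cell r c = none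
  cross_pairs : ∀ r c p, cell r c = some p →
    ∀ x y : Fin (2 * t), p = s(x, y) → (x : ℕ) / 2 ≠ (y : ℕ) / 2
  row_once : ∀ s x : Fin (2 * t), (s : ℕ) / 2 ≠ (x : ℕ) / 2 →
    ∃! c : Fin (2 * t), ∃ p, cell s c = some p ∧ x ∈ p
  col_once : ∀ s x : Fin (2 * t), (s : ℕ) / 2 ≠ (x : ℕ) / 2 →
    ∃! r : Fin (2 * t), ∃ p, cell r s = some p ∧ x ∈ p
  pair_once : ∀ x y : Fin (2 * t), (x : ℕ) / 2 ≠ (y : ℕ) / 2 →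
    ∃! rc : Fin (2 * t) × Fin (2 * t), cell rc.1 rc.2 = some s(x, y)

/-- Super-simplicity for a Room frame: the underlying 4-sets of any two distinct
filled cells share at most two elements. -/
def RoomFrame2.SuperSimple {t : ℕ} (F : RoomFrame2 t) : Prop :=
  ∀ r₁ c₁ p₁ r₂ c₂ p₂, F.cell r₁ c₁ = some p₁ → F.cell r₂ c₂ = some p₂ →
    (r₁, c₁) ≠ (r₂, c₂) →
    (({x | x ∈ p₁} ∪ {r₁, c₁}) ∩ ({x | x ∈ p₂} ∪ {r₂, c₂}) : Set (Fin (2 * t))).ncard ≤ 2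


namespace RoomSS

variable {t : ℕ}

/-- The filled cells of the frame. -/
def cells (F : RoomFrame2 t) : Finset (Fin (2*t) × Fin (2*t)) :=
  univ.filter fun rc => (F.cell rc.1 rc.2).isSome

/-- Filled cells in a given row. -/
def rowCells (F : RoomFrame2 t) (r : Fin (2*t)) : Finset (Fin (2*t)) :=
  univ.filter fun c => (F.cell r c).isSome

lemma holemate_card (x : Fin (2*t)) :
    (univ.filter fun y : Fin (2*t) => (x:ℕ)/2 = (y:ℕ)/2).card = 2 := by
  have hx := x.isLt
  have h : (univ.filter fun y : Fin (2*t) => (x:ℕ)/2 = (y:ℕ)/2) =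
      {⟨2*((x:ℕ)/2), by omega⟩, ⟨2*((x:ℕ)/2)+1, by omega⟩} := by
    ext y
    simp only [mem_filter, mem_univ, true_and, mem_insert, mem_singleton, Fin.ext_iff]
    omega
  rw [h]
  rw [Finset.card_insert_of_notMem (by simp [Fin.ext_iff]), Finset.card_singleton]

lemma nonhole_card (x : Fin (2*t)) :
    (univ.filter fun y : Fin (2*t) => ¬ ((x:ℕ)/2 = (y:ℕ)/2)).card = 2*t - 2 := by
  have h := Finset.card_filter_add_card_filter_not
    (s := (univ : Finset (Fin (2*t)))) (p := fun y => (x:ℕ)/2 = (y:ℕ)/2)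
  rw [holemate_card] at h
  simp only [Finset.card_univ, Fintype.card_fin] at h
  omega

/-- Total number of filled cells. -/
lemma cells_card (F : RoomFrame2 t) : (cells F).card = 2*t*(t-1) := by
  classical
  set g : Fin (2*t) × Fin (2*t) → Fin (2*t) × Fin (2*t) := fun xy =>
    if h : (xy.1:ℕ)/2 ≠ (xy.2:ℕ)/2 then (F.pair_once xy.1 xy.2 h).choose else xy with hg
  have hgdef : ∀ (xy : Fin (2*t) × Fin (2*t)) (h : (xy.1:ℕ)/2 ≠ (xy.2:ℕ)/2),
      g xy = (F.pair_once xy.1 xy.2 h).choose := by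
    intro xy h; rw [hg]; exact dif_pos h
  set OP := univ.filter (fun xy : Fin (2*t) × Fin (2*t) => (xy.1:ℕ)/2 ≠ (xy.2:ℕ)/2) with hOP
  have hmap : ∀ xy ∈ OP, g xy ∈ cells F := by
    intro xy hxy
    rw [hOP, mem_filter] at hxy
    have hspec := (F.pair_once xy.1 xy.2 hxy.2).choose_spec.1
    rw [← hgdef xy hxy.2] at hspec
    simp only [cells, mem_filter, mem_univ, true_and, Option.isSome_iff_exists]
    exact ⟨_, hspec⟩
  have hsum := Finset.card_eq_sum_card_fiberwise hmap
  have hfib : ∀ rc ∈ cells F, (OP.filter fun xy => g xy = rc).card = 2 := by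
    intro rc hrc
    simp only [cells, mem_filter, mem_univ, true_and, Option.isSome_iff_exists] at hrc
    obtain ⟨p, hp⟩ := hrc
    obtain ⟨a, b, rfl⟩ : ∃ a b, p = s(a,b) := by
      induction p using Sym2.ind with | _ x y => exact ⟨x, y, rfl⟩
    have hab : (a:ℕ)/2 ≠ (b:ℕ)/2 := F.cross_pairs rc.1 rc.2 _ hp a b rfl
    have habne : a ≠ b := fun h => hab (by rw [h])
    have hset : OP.filter (fun xy => g xy = rc) = {(a,b),(b,a)} := by
      ext xy
      simp only [mem_filter, hOP, mem_univ, true_and, mem_insert, mem_singleton]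
      constructor
      · rintro ⟨hne, hgxy⟩
        have hspec := (F.pair_once xy.1 xy.2 hne).choose_spec.1
        rw [← hgdef xy hne, hgxy, hp] at hspec
        have := Option.some.inj hspec
        rw [Sym2.eq_iff] at this
        rcases this with ⟨h1, h2⟩ | ⟨h1, h2⟩
        · left; rw [Prod.ext_iff]; exact ⟨h1.symm, h2.symm⟩
        · right; rw [Prod.ext_iff]; exact ⟨h2.symm, h1.symm⟩
      · intro hxy
        have hkey : ∀ x y : Fin (2*t), (x,y) = xy → (x:ℕ)/2 ≠ (y:ℕ)/2 →
            F.cell rc.1 rc.2 = some s(x,y) → ((xy.1:ℕ)/2 ≠ (xy.2:ℕ)/2 ∧ g xy = rc) := by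
          rintro x y rfl hne hcell
          refine ⟨hne, ?_⟩
          rw [hgdef (x,y) hne]
          exact ((F.pair_once x y hne).choose_spec.2 rc hcell).symm
        rcases hxy with rfl | rfl
        · exact hkey a b rfl hab hp
        · exact hkey b a rfl (Ne.symm hab) (by rw [hp, Sym2.eq_swap])
    rw [hset]
    rw [Finset.card_insert_of_notMem
        (by simp only [mem_singleton, Prod.ext_iff, not_and]; exact fun h _ => habne h),
      Finset.card_singleton]
  have hOPcard : OP.card = 4*(t*t) - 4*t := by
    have h := Finset.card_filter_add_card_filter_not
      (s := (univ : Finset (Fin (2*t) × Fin (2*t))))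
      (p := fun xy => (xy.1:ℕ)/2 ≠ (xy.2:ℕ)/2)
    have hneg : (univ.filter fun xy : Fin (2*t) × Fin (2*t) =>
        ¬ ((xy.1:ℕ)/2 ≠ (xy.2:ℕ)/2)).card = 2*(2*t) := by
      rw [Finset.card_filter]
      rw [← Finset.univ_product_univ, Finset.sum_product]
      have : ∀ x : Fin (2*t), (∑ y : Fin (2*t),
          if ¬ ((x:ℕ)/2 ≠ (y:ℕ)/2) then 1 else 0) = 2 := by
        intro x
        rw [← Finset.card_filter]
        simpa using holemate_card x
      rw [Finset.sum_congr rfl (fun x _ => this x)]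
      simp [Finset.card_univ, mul_comm]
    rw [hneg] at h
    have hcard : (univ : Finset (Fin (2*t) × Fin (2*t))).card = 4*(t*t) := by
      simp only [Finset.card_univ, Fintype.card_prod, Fintype.card_fin]
      ring
    rw [hcard] at h
    rw [hOP]
    omega
  have hconst : ∑ rc ∈ cells F, (OP.filter fun xy => g xy = rc).card = (cells F).card * 2 := by
    rw [Finset.sum_congr rfl hfib, Finset.sum_const, smul_eq_mul]
  rw [hconst, hOPcard] at hsum
  have h2 : 4*(t*t) - 4*t = (2*t*(t-1)) * 2 := by
    cases t with
    | zero => rfl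
    | succ n =>
      have hs : (n+1) - 1 = n := rfl
      rw [hs]
      have e1 : 4*((n+1)*(n+1)) = 4*(n+1) + (2*(n+1)*n)*2 := by ring
      omega
  omega

lemma total_eq_sum_rows (F : RoomFrame2 t) :
    (cells F).card = ∑ r : Fin (2*t), (rowCells F r).card := by
  classical
  have hmap : ∀ rc ∈ cells F, rc.1 ∈ (univ : Finset (Fin (2*t))) := fun _ _ => mem_univ _
  rw [Finset.card_eq_sum_card_fiberwise hmap]
  refine Finset.sum_congr rfl fun r _ => ?_
  refine Finset.card_bij (fun rc _ => rc.2) ?_ ?_ ?_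
  · intro rc hrc
    simp only [mem_filter, cells, mem_univ, true_and] at hrc
    simp only [rowCells, mem_filter, mem_univ, true_and]
    rw [← hrc.2]; exact hrc.1
  · intro a ha b hb hab
    simp only [mem_filter, cells, mem_univ, true_and] at ha hb
    have h1 : a.1 = b.1 := by rw [ha.2, hb.2]
    exact Prod.ext h1 hab
  · intro c hc
    simp only [rowCells, mem_filter, mem_univ, true_and] at hc
    exact ⟨(r, c), by simp [cells, mem_filter, hc], rfl⟩

lemma row_sum_bound (F : RoomFrame2 t) (r : Fin (2*t)) :
    ∃ fib : Fin (2*t) → Finset (Fin (2*t)),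
      (∀ c ∈ rowCells F r, ∀ p, F.cell r c = some p →
        fib c ⊆ {z | z ∈ p ∧ ¬ ((r:ℕ)/2 = (z:ℕ)/2)}.toFinset) ∧
      2*t - 2 = ∑ c ∈ rowCells F r, (fib c).card := by
  classical
  set Z := univ.filter (fun z : Fin (2*t) => ¬ ((r:ℕ)/2 = (z:ℕ)/2)) with hZ
  set g : Fin (2*t) → Fin (2*t) := fun z =>
    if h : (r:ℕ)/2 ≠ (z:ℕ)/2 then (F.row_once r z h).choose else z with hg
  have hgdef : ∀ (z : Fin (2*t)) (h : (r:ℕ)/2 ≠ (z:ℕ)/2),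
      g z = (F.row_once r z h).choose := by
    intro z h; rw [hg]; exact dif_pos h
  have hmap : ∀ z ∈ Z, g z ∈ rowCells F r := by
    intro z hz
    rw [hZ, mem_filter] at hz
    have hspec := (F.row_once r z hz.2).choose_spec.1
    rw [← hgdef z hz.2] at hspec
    obtain ⟨p, hp, _⟩ := hspec
    simp only [rowCells, mem_filter, mem_univ, true_and, hp, Option.isSome_some]
  refine ⟨fun c => Z.filter fun z => g z = c, ?_, ?_⟩
  · intro c _ p hp z hzmem
    simp only [mem_filter] at hzmem
    obtain ⟨hzZ, hgz⟩ := hzmem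
    rw [hZ, mem_filter] at hzZ
    have hzr : ¬ ((r:ℕ)/2 = (z:ℕ)/2) := hzZ.2
    have hspec := (F.row_once r z hzr).choose_spec.1
    rw [← hgdef z hzr, hgz] at hspec
    obtain ⟨p', hp', hzp'⟩ := hspec
    rw [hp] at hp'
    simp only [Set.mem_toFinset, Set.mem_setOf_eq]
    refine ⟨?_, hzr⟩
    rw [Option.some.inj hp']
    exact hzp'
  · have := Finset.card_eq_sum_card_fiberwise hmap
    rw [← this, hZ, nonhole_card r]

lemma pair_toFinset_card {a b : Fin (2*t)} : ({z | z ∈ s(a,b)}.toFinset).card ≤ 2 := by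
  classical
  have : {z | z ∈ s(a,b)}.toFinset ⊆ {a, b} := by
    intro z hz
    simp only [Set.mem_toFinset, Set.mem_setOf_eq, Sym2.mem_iff] at hz
    simpa using hz
  calc ({z | z ∈ s(a,b)}.toFinset).card ≤ ({a,b} : Finset _).card := Finset.card_le_card this
    _ ≤ 2 := Finset.card_insert_le _ _ |>.trans (by simp)

lemma row_lb (F : RoomFrame2 t) (r : Fin (2*t)) :
    2*t - 2 ≤ 2 * (rowCells F r).card := by
  classical
  obtain ⟨fib, hsub, hsum⟩ := row_sum_bound F r
  have hb : ∀ c ∈ rowCells F r, (fib c).card ≤ 2 := by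
    intro c hc
    simp only [rowCells, mem_filter, mem_univ, true_and, Option.isSome_iff_exists] at hc
    obtain ⟨p, hp⟩ := hc
    obtain ⟨a, b, rfl⟩ : ∃ a b, p = s(a,b) := by
      induction p using Sym2.ind with | _ x y => exact ⟨x, y, rfl⟩
    have hc' : c ∈ rowCells F r := by
      simp only [rowCells, mem_filter, mem_univ, true_and, hp, Option.isSome_some]
    have hsub2 : fib c ⊆ {z | z ∈ s(a,b)}.toFinset := by
      intro z hz
      have := hsub c hc' _ hp hz
      simp only [Set.mem_toFinset, Set.mem_setOf_eq] at this ⊢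
      exact this.1
    calc (fib c).card ≤ ({z | z ∈ s(a,b)}.toFinset).card := Finset.card_le_card hsub2
      _ ≤ 2 := pair_toFinset_card
  have := Finset.sum_le_card_nsmul (rowCells F r) _ 2 hb
  rw [smul_eq_mul] at this
  omega

lemma row_lb_strict (F : RoomFrame2 t) (r c₀ : Fin (2*t)) (p₀ : Sym2 (Fin (2*t)))
    (h₀ : F.cell r c₀ = some p₀) (x : Fin (2*t)) (hx : x ∈ p₀)
    (hhole : (x:ℕ)/2 = (r:ℕ)/2) : 2*t - 1 ≤ 2 * (rowCells F r).card := by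
  classical
  obtain ⟨fib, hsub, hsum⟩ := row_sum_bound F r
  have hc₀ : c₀ ∈ rowCells F r := by
    simp only [rowCells, mem_filter, mem_univ, true_and, h₀, Option.isSome_some]
  obtain ⟨a, b, rfl⟩ : ∃ a b, p₀ = s(a,b) := by
    induction p₀ using Sym2.ind with | _ u v => exact ⟨u, v, rfl⟩
  have h1 : (fib c₀).card ≤ 1 := by
    have hss := hsub c₀ hc₀ _ h₀
    rcases Sym2.mem_iff.mp hx with rfl | rfl
    · have : fib c₀ ⊆ {b} := by
        intro z hz
        have := hss hz
        simp only [Set.mem_toFinset, Set.mem_setOf_eq, Sym2.mem_iff] at this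
        obtain ⟨hz1 | hz1, hz2⟩ := this
        · exact absurd (by rw [hz1]; exact hhole.symm) hz2
        · simp [hz1]
      calc (fib c₀).card ≤ ({b} : Finset _).card := Finset.card_le_card this
        _ = 1 := Finset.card_singleton b
    · have : fib c₀ ⊆ {a} := by
        intro z hz
        have := hss hz
        simp only [Set.mem_toFinset, Set.mem_setOf_eq, Sym2.mem_iff] at this
        obtain ⟨hz1 | hz1, hz2⟩ := this
        · simp [hz1]
        · exact absurd (by rw [hz1]; exact hhole.symm) hz2
      calc (fib c₀).card ≤ ({a} : Finset _).card := Finset.card_le_card this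
        _ = 1 := Finset.card_singleton a
  have hb : ∀ c ∈ (rowCells F r).erase c₀, (fib c).card ≤ 2 := by
    intro c hc
    have hc' := Finset.mem_of_mem_erase hc
    simp only [rowCells, mem_filter, mem_univ, true_and, Option.isSome_iff_exists] at hc'
    obtain ⟨p, hp⟩ := hc'
    obtain ⟨u, v, rfl⟩ : ∃ u v, p = s(u,v) := by
      induction p using Sym2.ind with | _ u v => exact ⟨u, v, rfl⟩
    have hc'' : c ∈ rowCells F r := Finset.mem_of_mem_erase hc
    have hsub2 : fib c ⊆ {z | z ∈ s(u,v)}.toFinset := by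
      intro z hz
      have := hsub c hc'' _ hp hz
      simp only [Set.mem_toFinset, Set.mem_setOf_eq] at this ⊢
      exact this.1
    calc (fib c).card ≤ ({z | z ∈ s(u,v)}.toFinset).card := Finset.card_le_card hsub2
      _ ≤ 2 := pair_toFinset_card
  have hsplit := Finset.sum_erase_add (rowCells F r) (fun c => (fib c).card) hc₀
  beta_reduce at hsplit
  have hsum2 := Finset.sum_le_card_nsmul ((rowCells F r).erase c₀)
    (fun c => (fib c).card) 2 hb
  rw [smul_eq_mul] at hsum2
  have hcard_erase : ((rowCells F r).erase c₀).card = (rowCells F r).card - 1 :=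
    Finset.card_erase_of_mem hc₀
  have hpos : 0 < (rowCells F r).card := Finset.card_pos.mpr ⟨c₀, hc₀⟩
  omega

lemma row_avoid (F : RoomFrame2 t) {r c : Fin (2*t)} {p : Sym2 (Fin (2*t))} {x : Fin (2*t)}
    (h : F.cell r c = some p) (hx : x ∈ p) : ¬ ((x:ℕ)/2 = (r:ℕ)/2) := by
  intro hhole
  have h1 := row_lb_strict F r c p h x hx hhole
  have h2 : ∀ r' : Fin (2*t), 2*t - 2 ≤ 2 * (rowCells F r').card := row_lb F
  have h3 := total_eq_sum_rows F
  rw [cells_card] at h3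
  have key : ∑ r' : Fin (2*t), 2 * (rowCells F r').card = 2 * (2*t*(t-1)) := by
    rw [← Finset.mul_sum, ← h3]
  have hsplit := Finset.sum_erase_add (univ : Finset (Fin (2*t)))
    (fun r' => 2 * (rowCells F r').card) (mem_univ r)
  beta_reduce at hsplit
  have hlow := Finset.card_nsmul_le_sum ((univ : Finset (Fin (2*t))).erase r)
    (fun r' => 2 * (rowCells F r').card) (2*t-2) (fun r' _ => h2 r')
  have hcard : ((univ : Finset (Fin (2*t))).erase r).card = 2*t - 1 := by
    rw [Finset.card_erase_of_mem (mem_univ r), Finset.card_univ, Fintype.card_fin]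
  rw [hcard, smul_eq_mul] at hlow
  have ht : 1 ≤ t := by have := r.isLt; omega
  obtain ⟨n, rfl⟩ : ∃ n, t = n + 1 := ⟨t - 1, by omega⟩
  have e0a : 2*(n+1)-1 = 2*n+1 := by omega
  have e0b : 2*(n+1)-2 = 2*n := by omega
  rw [e0a, e0b] at hlow
  rw [e0a] at h1
  have e1 : (2*n+1) * (2*n) = 4*(n*n) + 2*n := by ring
  have e2 : 2 * (2*(n+1)*(n+1-1)) = 4*(n*n) + 4*n := by
    simp only [Nat.add_sub_cancel]; ring
  omega

/-- Transpose of a Room frame. -/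
def transposeF (F : RoomFrame2 t) : RoomFrame2 t where
  cell r c := F.cell c r
  hole_empty r c h := F.hole_empty c r h.symm
  cross_pairs r c p h := F.cross_pairs c r p h
  row_once s x h := F.col_once s x h
  col_once s x h := F.row_once s x h
  pair_once x y h := by
    obtain ⟨rc, hrc, huniq⟩ := F.pair_once x y h
    refine ⟨(rc.2, rc.1), hrc, ?_⟩
    rintro ⟨a, b⟩ hab
    have := huniq (b, a) hab
    rw [Prod.ext_iff] at this ⊢
    exact ⟨this.2, this.1⟩

lemma col_avoid (F : RoomFrame2 t) {r c : Fin (2*t)} {p : Sym2 (Fin (2*t))} {x : Fin (2*t)}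
    (h : F.cell r c = some p) (hx : x ∈ p) : ¬ ((x:ℕ)/2 = (c:ℕ)/2) :=
  row_avoid (transposeF F) (show (transposeF F).cell c r = some p from h) hx

/-- The codeword associated to a filled cell. -/
def cw (r c : Fin (2*t)) (p : Sym2 (Fin (2*t))) : Fin (2*t) → ZMod 4 := fun z =>
  if z = r then 2 else if z = c then 3 else if z ∈ p then 1 else 0

lemma cw_eq_two_iff {r c z : Fin (2*t)} {p : Sym2 (Fin (2*t))} :
    cw r c p z = 2 ↔ z = r := by
  unfold cw
  split_ifs with h1 h2 h3
  · exact iff_of_true rfl h1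
  · exact iff_of_false (by decide) h1
  · exact iff_of_false (by decide) h1
  · exact iff_of_false (by decide) h1

lemma cw_eq_three_iff {r c z : Fin (2*t)} {p : Sym2 (Fin (2*t))} (hrc : r ≠ c) :
    cw r c p z = 3 ↔ z = c := by
  unfold cw
  split_ifs with h1 h2 h3
  · exact iff_of_false (by decide) (fun h => hrc (h1.symm.trans h))
  · exact iff_of_true rfl h2
  · exact iff_of_false (by decide) h2
  · exact iff_of_false (by decide) h2

lemma cw_eq_one_iff {r c z : Fin (2*t)} {p : Sym2 (Fin (2*t))}
    (hr : r ∉ p) (hc : c ∉ p) : cw r c p z = 1 ↔ z ∈ p := by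
  unfold cw
  split_ifs with h1 h2 h3
  · exact iff_of_false (by decide) (fun h => hr (h1 ▸ h))
  · exact iff_of_false (by decide) (fun h => hc (h2 ▸ h))
  · exact iff_of_true rfl h3
  · exact iff_of_false (by decide) h3

lemma cw_ne_zero_iff {r c z : Fin (2*t)} {p : Sym2 (Fin (2*t))} :
    cw r c p z ≠ 0 ↔ (z = r ∨ z = c ∨ z ∈ p) := by
  unfold cw
  split_ifs with h1 h2 h3
  · exact iff_of_true (by decide) (Or.inl h1)
  · exact iff_of_true (by decide) (Or.inr (Or.inl h2))
  · exact iff_of_true (by decide) (Or.inr (Or.inr h3))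
  · exact iff_of_false (fun h => h rfl) (by tauto)

/-- All the distinctness facts about a filled cell. -/
lemma cell_facts (F : RoomFrame2 t) {r c a b : Fin (2*t)}
    (h : F.cell r c = some s(a,b)) :
    a ≠ b ∧ r ≠ a ∧ r ≠ b ∧ c ≠ a ∧ c ≠ b ∧ r ≠ c := by
  have hab : (a:ℕ)/2 ≠ (b:ℕ)/2 := F.cross_pairs r c _ h a b rfl
  have hra := row_avoid F h (Sym2.mem_mk_left a b)
  have hrb := row_avoid F h (Sym2.mem_mk_right a b)
  have hca := col_avoid F h (Sym2.mem_mk_left a b)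
  have hcb := col_avoid F h (Sym2.mem_mk_right a b)
  have hrc : ¬ ((r:ℕ)/2 = (c:ℕ)/2) := by
    intro hh
    rw [F.hole_empty r c hh] at h
    exact Option.some_ne_none _ h.symm
  exact ⟨fun h' => hab (by rw [h']), fun h' => hra (by rw [h']),
    fun h' => hrb (by rw [h']), fun h' => hca (by rw [h']),
    fun h' => hcb (by rw [h']), fun h' => hrc (by rw [h'])⟩

lemma r_not_mem {r a b : Fin (2*t)} (hra : r ≠ a) (hrb : r ≠ b) : r ∉ s(a,b) := by
  rw [Sym2.mem_iff]
  rintro (h | h)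
  · exact hra h
  · exact hrb h

lemma comp_cw {r c a b : Fin (2*t)} (hab : a ≠ b) (hra : r ≠ a) (hrb : r ≠ b)
    (hca : c ≠ a) (hcb : c ≠ b) (hrc : r ≠ c) :
    HasComposition w211 (cw r c s(a,b)) := by
  classical
  have hr : r ∉ s(a,b) := r_not_mem hra hrb
  have hc : c ∉ s(a,b) := r_not_mem hca hcb
  intro j hj
  rcases (show ∀ j : ZMod 4, j ≠ 0 → j = 1 ∨ j = 2 ∨ j = 3 by decide) j hj
    with rfl | rfl | rfl
  · have hset : univ.filter (fun z => cw r c s(a,b) z = 1) = {a, b} := by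
      ext z
      simp only [mem_filter, mem_univ, true_and, mem_insert, mem_singleton]
      rw [cw_eq_one_iff hr hc, Sym2.mem_iff]
    rw [hset, show w211 1 = 2 from by decide,
      Finset.card_insert_of_notMem (by simpa using hab), Finset.card_singleton]
  · have hset : univ.filter (fun z => cw r c s(a,b) z = 2) = {r} := by
      ext z
      simp only [mem_filter, mem_univ, true_and, mem_singleton]
      rw [cw_eq_two_iff]
    rw [hset, show w211 2 = 1 from by decide, Finset.card_singleton]
  · have hset : univ.filter (fun z => cw r c s(a,b) z = 3) = {c} := by
      ext z
      simp only [mem_filter, mem_univ, true_and, mem_singleton]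
      rw [cw_eq_three_iff hrc]
    rw [hset, show w211 3 = 1 from by decide, Finset.card_singleton]

lemma cw_inj (F : RoomFrame2 t) {r1 c1 a1 b1 r2 c2 a2 b2 : Fin (2*t)}
    (h1 : F.cell r1 c1 = some s(a1,b1)) (h2 : F.cell r2 c2 = some s(a2,b2))
    (heq : cw r1 c1 s(a1,b1) = cw r2 c2 s(a2,b2)) : (r1, c1) = (r2, c2) := by
  obtain ⟨_, _, _, _, _, hrc1⟩ := cell_facts F h1
  obtain ⟨_, _, _, _, _, hrc2⟩ := cell_facts F h2
  have e1 : cw r1 c1 s(a1,b1) r1 = 2 := cw_eq_two_iff.mpr rfl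
  have e2 : cw r1 c1 s(a1,b1) c1 = 3 := (cw_eq_three_iff hrc1).mpr rfl
  rw [heq] at e1 e2
  rw [cw_eq_two_iff] at e1
  rw [cw_eq_three_iff hrc2] at e2
  rw [Prod.ext_iff]
  exact ⟨e1, e2⟩

/-- The quad of a filled cell as a finset. -/
lemma quad_card {r c a b : Fin (2*t)} (hab : a ≠ b) (hra : r ≠ a) (hrb : r ≠ b)
    (hca : c ≠ a) (hcb : c ≠ b) (hrc : r ≠ c) :
    ({a, b, r, c} : Finset (Fin (2*t))).card = 4 := by
  rw [Finset.card_insert_of_notMem (by simp [hab, hra.symm, hca.symm]),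
    Finset.card_insert_of_notMem (by simp [hrb.symm, hcb.symm]),
    Finset.card_insert_of_notMem (by simp [hrc]), Finset.card_singleton]

lemma quad_coe {r c a b : Fin (2*t)} :
    ({x | x ∈ s(a,b)} ∪ {r, c} : Set (Fin (2*t))) = (({a, b, r, c} : Finset (Fin (2*t))) : Set (Fin (2*t))) := by
  ext z
  simp only [Set.mem_union, Set.mem_setOf_eq, Sym2.mem_iff, Set.mem_insert_iff,
    Set.mem_singleton_iff, Finset.coe_insert, Finset.coe_singleton]
  tauto

lemma mem_quad_iff {r c a b z : Fin (2*t)} :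
    z ∈ ({a, b, r, c} : Finset (Fin (2*t))) ↔ cw r c s(a,b) z ≠ 0 := by
  rw [cw_ne_zero_iff, Sym2.mem_iff]
  simp only [mem_insert, mem_singleton]
  tauto

lemma dist_five (F : RoomFrame2 t) (hss : F.SuperSimple) {r1 c1 r2 c2 : Fin (2*t)}
    {p1 p2 : Sym2 (Fin (2*t))}
    (h1 : F.cell r1 c1 = some p1) (h2 : F.cell r2 c2 = some p2)
    (hne : (r1, c1) ≠ (r2, c2)) :
    5 ≤ hammingDist (cw r1 c1 p1) (cw r2 c2 p2) := by
  classical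
  obtain ⟨a1, b1, rfl⟩ : ∃ a b, p1 = s(a,b) := by
    induction p1 using Sym2.ind with | _ u v => exact ⟨u, v, rfl⟩
  obtain ⟨a2, b2, rfl⟩ : ∃ a b, p2 = s(a,b) := by
    induction p2 using Sym2.ind with | _ u v => exact ⟨u, v, rfl⟩
  obtain ⟨hab1, hra1, hrb1, hca1, hcb1, hrc1⟩ := cell_facts F h1
  obtain ⟨hab2, hra2, hrb2, hca2, hcb2, hrc2⟩ := cell_facts F h2
  set u := cw r1 c1 s(a1,b1) with hu
  set v := cw r2 c2 s(a2,b2) with hv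
  set Q1 : Finset (Fin (2*t)) := {a1, b1, r1, c1} with hQ1
  set Q2 : Finset (Fin (2*t)) := {a2, b2, r2, c2} with hQ2
  have hQ1card : Q1.card = 4 := quad_card hab1 hra1 hrb1 hca1 hcb1 hrc1
  have hQ2card : Q2.card = 4 := quad_card hab2 hra2 hrb2 hca2 hcb2 hrc2
  have hmem1 : ∀ z, z ∈ Q1 ↔ u z ≠ 0 := fun z => mem_quad_iff
  have hmem2 : ∀ z, z ∈ Q2 ↔ v z ≠ 0 := fun z => mem_quad_iff
  have hk : (Q1 ∩ Q2).card ≤ 2 := by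
    have hss' := hss r1 c1 _ r2 c2 _ h1 h2 hne
    rw [quad_coe, quad_coe, ← Finset.coe_inter, Set.ncard_coe_finset] at hss'
    exact hss'
  have hdiff : hammingDist u v = (univ.filter fun z => u z ≠ v z).card := rfl
  have hsub0 : (Q1 \ Q2) ∪ (Q2 \ Q1) ⊆ univ.filter (fun z => u z ≠ v z) := by
    intro z hz
    simp only [mem_union, mem_sdiff] at hz
    simp only [mem_filter, mem_univ, true_and]
    rcases hz with ⟨hz1, hz2⟩ | ⟨hz2, hz1⟩
    · have e1 : u z ≠ 0 := (hmem1 z).mp hz1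
      have e2 : v z = 0 := by
        by_contra hcon
        exact hz2 ((hmem2 z).mpr hcon)
      rw [e2]; exact e1
    · have e1 : v z ≠ 0 := (hmem2 z).mp hz2
      have e2 : u z = 0 := by
        by_contra hcon
        exact hz1 ((hmem1 z).mpr hcon)
      rw [e2]; exact fun h => e1 h.symm
  have hcA := Finset.card_inter_add_card_sdiff Q1 Q2
  have hcB := Finset.card_inter_add_card_sdiff Q2 Q1
  rw [Finset.inter_comm] at hcB
  have hdisj : Disjoint (Q1 \ Q2) (Q2 \ Q1) := disjoint_sdiff_sdiff
  have hunion := Finset.card_union_of_disjoint hdisj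
  by_cases hk1 : (Q1 ∩ Q2).card ≤ 1
  · have h6 : 5 ≤ ((Q1 \ Q2) ∪ (Q2 \ Q1)).card := by omega
    rw [hdiff]
    exact le_trans h6 (Finset.card_le_card hsub0)
  · have hk2 : (Q1 ∩ Q2).card = 2 := by omega
    obtain ⟨z, w, hzw, hzwset⟩ := Finset.card_eq_two.mp hk2
    have hzmem : z ∈ Q1 ∩ Q2 := by rw [hzwset]; simp
    have hwmem : w ∈ Q1 ∩ Q2 := by rw [hzwset]; simp
    -- helpers for the agreement contradiction
    have hrow : r1 = r2 → ∀ x, x ∈ s(a1,b1) → x ∈ s(a2,b2) → False := by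
      intro hr x hx1 hx2
      have hx1' := row_avoid F h1 hx1
      obtain ⟨cc, _, huniq⟩ := F.row_once r1 x (fun hh => hx1' hh.symm)
      have e1 : c1 = cc := huniq c1 ⟨_, h1, hx1⟩
      have e2 : c2 = cc := huniq c2 ⟨_, by rw [hr]; exact h2, hx2⟩
      exact hne (by rw [Prod.ext_iff]; exact ⟨hr, e1.trans e2.symm⟩)
    have hcol : c1 = c2 → ∀ x, x ∈ s(a1,b1) → x ∈ s(a2,b2) → False := by
      intro hcc x hx1 hx2
      have hx1' := col_avoid F h1 hx1
      obtain ⟨rr, _, huniq⟩ := F.col_once c1 x (fun hh => hx1' hh.symm)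
      have e1 : r1 = rr := huniq r1 ⟨_, h1, hx1⟩
      have e2 : r2 = rr := huniq r2 ⟨_, by rw [hcc]; exact h2, hx2⟩
      exact hne (by rw [Prod.ext_iff]; exact ⟨e1.trans e2.symm, hcc⟩)
    have hpair : z ∈ s(a1,b1) → w ∈ s(a1,b1) → z ∈ s(a2,b2) → w ∈ s(a2,b2) → False := by
      intro hz1 hw1 hz2 hw2
      have hp1 : s(a1,b1) = s(z,w) := by
        rcases Sym2.mem_iff.mp hz1 with rfl | rfl <;> rcases Sym2.mem_iff.mp hw1 with rfl | rfl
        · exact absurd rfl hzw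
        · rfl
        · exact Sym2.eq_swap
        · exact absurd rfl hzw
      have hp2 : s(a2,b2) = s(z,w) := by
        rcases Sym2.mem_iff.mp hz2 with rfl | rfl <;> rcases Sym2.mem_iff.mp hw2 with rfl | rfl
        · exact absurd rfl hzw
        · rfl
        · exact Sym2.eq_swap
        · exact absurd rfl hzw
      rw [hp1] at h1
      rw [hp2] at h2
      have hzw2 : (z:ℕ)/2 ≠ (w:ℕ)/2 := F.cross_pairs r1 c1 _ h1 z w rfl
      obtain ⟨rc, _, huniq⟩ := F.pair_once z w hzw2
      exact hne ((huniq (r1,c1) h1).trans (huniq (r2,c2) h2).symm)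
    -- role extraction
    have role : ∀ x, x ∈ Q1 → x ∈ Q2 → u x = v x →
        (x = r1 ∧ x = r2) ∨ (x = c1 ∧ x = c2) ∨ (x ∈ s(a1,b1) ∧ x ∈ s(a2,b2)) := by
      intro x hx1 hx2 heq
      have hx0 : u x ≠ 0 := (hmem1 x).mp hx1
      rcases (show ∀ j : ZMod 4, j ≠ 0 → j = 1 ∨ j = 2 ∨ j = 3 by decide) _ hx0
        with hval | hval | hval
      · refine Or.inr (Or.inr ⟨?_, ?_⟩)
        · exact (cw_eq_one_iff (r_not_mem hra1 hrb1) (r_not_mem hca1 hcb1)).mp hval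
        · exact (cw_eq_one_iff (r_not_mem hra2 hrb2) (r_not_mem hca2 hcb2)).mp
            (heq.symm.trans hval)
      · exact Or.inl ⟨cw_eq_two_iff.mp hval, cw_eq_two_iff.mp (heq.symm.trans hval)⟩
      · exact Or.inr (Or.inl ⟨(cw_eq_three_iff hrc1).mp hval,
          (cw_eq_three_iff hrc2).mp (heq.symm.trans hval)⟩)
    have hdis : u z ≠ v z ∨ u w ≠ v w := by
      by_contra hcon
      push_neg at hcon
      obtain ⟨hz12⟩ := Finset.mem_inter.mp hzmem
      have hz2' := (Finset.mem_inter.mp hzmem).2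
      have hw1' := (Finset.mem_inter.mp hwmem).1
      have hw2' := (Finset.mem_inter.mp hwmem).2
      rcases role z hz12 hz2' hcon.1 with ⟨hzr1, hzr2⟩ | ⟨hzc1, hzc2⟩ | ⟨hzp1, hzp2⟩ <;>
        rcases role w hw1' hw2' hcon.2 with ⟨hwr1, hwr2⟩ | ⟨hwc1, hwc2⟩ | ⟨hwp1, hwp2⟩
      · exact hzw (hzr1.trans hwr1.symm)
      · exact hne (by rw [Prod.ext_iff]
                      exact ⟨hzr1.symm.trans hzr2, hwc1.symm.trans hwc2⟩)
      · exact hrow (hzr1.symm.trans hzr2) w hwp1 hwp2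
      · exact hne (by rw [Prod.ext_iff]
                      exact ⟨hwr1.symm.trans hwr2, hzc1.symm.trans hzc2⟩)
      · exact hzw (hzc1.trans hwc1.symm)
      · exact hcol (hzc1.symm.trans hzc2) w hwp1 hwp2
      · exact hrow (hwr1.symm.trans hwr2) z hzp1 hzp2
      · exact hcol (hwc1.symm.trans hwc2) z hzp1 hzp2
      · exact hpair hzp1 hwp1 hzp2 hwp2
    have hins : ∀ x, x ∈ Q1 ∩ Q2 → u x ≠ v x →
        5 ≤ hammingDist u v := by
      intro x hx hxd
      have hxQ1 := (Finset.mem_inter.mp hx).1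
      have hxQ2 := (Finset.mem_inter.mp hx).2
      have hnotin : x ∉ (Q1 \ Q2) ∪ (Q2 \ Q1) := by
        simp only [mem_union, mem_sdiff]
        rintro (⟨_, hh⟩ | ⟨_, hh⟩)
        · exact hh hxQ2
        · exact hh hxQ1
      have hsubx : insert x ((Q1 \ Q2) ∪ (Q2 \ Q1)) ⊆ univ.filter (fun y => u y ≠ v y) := by
        intro y hy
        rcases Finset.mem_insert.mp hy with rfl | hy'
        · simp only [mem_filter, mem_univ, true_and]; exact hxd
        · exact hsub0 hy'
      have hcardins : (insert x ((Q1 \ Q2) ∪ (Q2 \ Q1))).card = 5 := by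
        rw [Finset.card_insert_of_notMem hnotin, hunion]
        omega
      rw [hdiff, ← hcardins]
      exact Finset.card_le_card hsubx
    rcases hdis with hd | hd
    · exact hins z hzmem hd
    · exact hins w hwmem hd

/-- The code built from a Room frame. -/
noncomputable def codeF (F : RoomFrame2 t) : Finset (Fin (2*t) → ZMod 4) :=
  (cells F).image fun rc => cw rc.1 rc.2 ((F.cell rc.1 rc.2).getD s(rc.1, rc.1))

lemma mem_codeF {F : RoomFrame2 t} {u : Fin (2*t) → ZMod 4} (hu : u ∈ codeF F) :
    ∃ r c p, F.cell r c = some p ∧ u = cw r c p := by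
  classical
  obtain ⟨rc, hrc, hequ⟩ := Finset.mem_image.mp hu
  simp only [cells, mem_filter, mem_univ, true_and, Option.isSome_iff_exists] at hrc
  obtain ⟨p, hp⟩ := hrc
  refine ⟨rc.1, rc.2, p, hp, ?_⟩
  rw [← hequ, hp]
  rfl

lemma codeF_card (F : RoomFrame2 t) : (codeF F).card = 2*t*(t-1) := by
  classical
  rw [codeF, Finset.card_image_of_injOn, cells_card]
  intro rc hrc rc' hrc' hequ
  simp only [cells, mem_filter, mem_univ, true_and, Option.isSome_iff_exists,
    Finset.mem_coe] at hrc hrc'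
  obtain ⟨p, hp⟩ := hrc
  obtain ⟨p', hp'⟩ := hrc'
  beta_reduce at hequ
  rw [hp, hp'] at hequ
  simp only [Option.getD_some] at hequ
  obtain ⟨a, b, rfl⟩ : ∃ a b, p = s(a,b) := by
    induction p using Sym2.ind with | _ x y => exact ⟨x, y, rfl⟩
  obtain ⟨a', b', rfl⟩ : ∃ a b, p' = s(a,b) := by
    induction p' using Sym2.ind with | _ x y => exact ⟨x, y, rfl⟩
  have := cw_inj F hp hp' hequ
  rw [Prod.ext_iff] at this ⊢
  exact this

lemma codeF_isCC (F : RoomFrame2 t) (hss : F.SuperSimple) :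
    IsCCCode 4 5 w211 (codeF F) := by
  constructor
  · intro u hu
    obtain ⟨r, c, p, hp, rfl⟩ := mem_codeF hu
    obtain ⟨a, b, rfl⟩ : ∃ a b, p = s(a,b) := by
      induction p using Sym2.ind with | _ x y => exact ⟨x, y, rfl⟩
    obtain ⟨hab, hra, hrb, hca, hcb, hrc⟩ := cell_facts F hp
    exact comp_cw hab hra hrb hca hcb hrc
  · intro u hu v hv huv
    obtain ⟨r1, c1, p1, hp1, rfl⟩ := mem_codeF hu
    obtain ⟨r2, c2, p2, hp2, rfl⟩ := mem_codeF hv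
    have hne : (r1, c1) ≠ (r2, c2) := by
      intro hh
      rw [Prod.ext_iff] at hh
      obtain ⟨e1, e2⟩ := hh
      subst e1; subst e2
      rw [hp1] at hp2
      rw [Option.some.inj hp2] at huv
      exact huv rfl
    exact dist_five F hss hp1 hp2 hne

/-- Support of a word of composition [2,1,1] has exactly 4 elements. -/
lemma supp_card {n : ℕ} {u : Fin n → ZMod 4} (hu : HasComposition w211 u) :
    (univ.filter fun z => u z ≠ 0).card = 4 := by
  classical
  have h1 := hu 1 (by decide)
  have h2 := hu 2 (by decide)
  have h3 := hu 3 (by decide)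
  rw [show w211 1 = 2 from by decide] at h1
  rw [show w211 2 = 1 from by decide] at h2
  rw [show w211 3 = 1 from by decide] at h3
  have hset : univ.filter (fun z => u z ≠ 0) =
      (univ.filter (fun z => u z = 1) ∪ univ.filter (fun z => u z = 2)) ∪
        univ.filter (fun z => u z = 3) := by
    ext z
    simp only [mem_filter, mem_univ, true_and, mem_union]
    have := (show ∀ j : ZMod 4, j ≠ 0 ↔ (j = 1 ∨ j = 2 ∨ j = 3) by decide) (u z)
    tauto
  have d12 : Disjoint (univ.filter (fun z => u z = 1)) (univ.filter (fun z => u z = 2)) := by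
    rw [Finset.disjoint_left]
    intro x hx hy
    simp only [mem_filter, mem_univ, true_and] at hx hy
    rw [hx] at hy
    exact (by decide : (1 : ZMod 4) ≠ 2) hy
  have d3 : Disjoint (univ.filter (fun z => u z = 1) ∪ univ.filter (fun z => u z = 2))
      (univ.filter (fun z => u z = 3)) := by
    rw [Finset.disjoint_left]
    intro x hx hy
    simp only [mem_filter, mem_univ, true_and, mem_union] at hx hy
    rcases hx with hx | hx <;> rw [hx] at hy
    · exact (by decide : (1 : ZMod 4) ≠ 3) hy
    · exact (by decide : (2 : ZMod 4) ≠ 3) hy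
  rw [hset, Finset.card_union_of_disjoint d3, Finset.card_union_of_disjoint d12, h1, h2, h3]

lemma dist_le_four {n : ℕ} {u v : Fin n → ZMod 4}
    (hu : HasComposition w211 u) (hv : HasComposition w211 v) {a b : Fin n}
    (hab : a ≠ b) (ha : u a = v a) (ha0 : u a ≠ 0) (hb : u b = v b) (hb0 : u b ≠ 0) :
    hammingDist u v ≤ 4 := by
  classical
  have hva0 : v a ≠ 0 := ha ▸ ha0
  have hvb0 : v b ≠ 0 := hb ▸ hb0
  set Su := univ.filter (fun z => u z ≠ 0) with hSu
  set Sv := univ.filter (fun z => v z ≠ 0) with hSv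
  have hsub : (univ.filter fun z => u z ≠ v z) ⊆ (Su.erase a).erase b ∪ (Sv.erase a).erase b := by
    intro z hz
    simp only [mem_filter, mem_univ, true_and] at hz
    have hza : z ≠ a := by
      rintro rfl
      exact hz ha
    have hzb : z ≠ b := by
      rintro rfl
      exact hz hb
    have : u z ≠ 0 ∨ v z ≠ 0 := by
      by_contra hcon
      push_neg at hcon
      rw [hcon.1, hcon.2] at hz
      exact hz rfl
    rcases this with h | h
    · apply Finset.mem_union_left
      refine Finset.mem_erase.mpr ⟨hzb, Finset.mem_erase.mpr ⟨hza, ?_⟩⟩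
      simp only [hSu, mem_filter, mem_univ, true_and]
      exact h
    · apply Finset.mem_union_right
      refine Finset.mem_erase.mpr ⟨hzb, Finset.mem_erase.mpr ⟨hza, ?_⟩⟩
      simp only [hSv, mem_filter, mem_univ, true_and]
      exact h
  have hSucard : Su.card = 4 := supp_card hu
  have hSvcard : Sv.card = 4 := supp_card hv
  have haSu : a ∈ Su := by simp [hSu, ha0]
  have hbSu : b ∈ Su.erase a :=
    Finset.mem_erase.mpr ⟨Ne.symm hab, by simp [hSu, hb0]⟩
  have haSv : a ∈ Sv := by simp [hSv, hva0]
  have hbSv : b ∈ Sv.erase a :=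
    Finset.mem_erase.mpr ⟨Ne.symm hab, by simp [hSv, hvb0]⟩
  have e1 : ((Su.erase a).erase b).card = 2 := by
    rw [Finset.card_erase_of_mem hbSu, Finset.card_erase_of_mem haSu, hSucard]
  have e2 : ((Sv.erase a).erase b).card = 2 := by
    rw [Finset.card_erase_of_mem hbSv, Finset.card_erase_of_mem haSv, hSvcard]
  calc hammingDist u v = (univ.filter fun z => u z ≠ v z).card := rfl
    _ ≤ ((Su.erase a).erase b ∪ (Sv.erase a).erase b).card := Finset.card_le_card hsub
    _ ≤ ((Su.erase a).erase b).card + ((Sv.erase a).erase b).card := Finset.card_union_le _ _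
    _ ≤ 4 := by rw [e1, e2]

lemma card_le_bound (C : Finset (Fin (2*t) → ZMod 4)) (hC : IsCCCode 4 5 w211 C) :
    C.card ≤ 2*t*(t-1) := by
  classical
  have hswap : ∑ a : Fin (2*t), (C.filter fun u => u a = 2).card = C.card := by
    have e : ∀ a : Fin (2*t), (C.filter fun u => u a = 2).card
        = ∑ u ∈ C, if u a = 2 then 1 else 0 := fun a => Finset.card_filter _ _
    rw [Finset.sum_congr rfl (fun a _ => e a), Finset.sum_comm]
    have e2 : ∀ u ∈ C, (∑ a : Fin (2*t), if u a = 2 then 1 else 0) = 1 := by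
      intro u hu
      rw [← Finset.card_filter]
      have := hC.1 u hu 2 (by decide)
      rw [show w211 2 = 1 from by decide] at this
      exact this
    rw [Finset.sum_congr rfl e2]
    simp
  have hfib : ∀ a : Fin (2*t), 2 * (C.filter fun u => u a = 2).card ≤ 2*t - 1 := by
    intro a
    have honescard : ∀ u ∈ C.filter (fun u => u a = 2),
        (univ.filter fun z => u z = 1).card = 2 := by
      intro u hu
      have huC : u ∈ C := Finset.mem_of_mem_filter u hu
      have := hC.1 u huC 1 (by decide)
      rw [show w211 1 = 2 from by decide] at this
      exact this
    have hdisj : ∀ u ∈ C.filter (fun u => u a = 2), ∀ v ∈ C.filter (fun u => u a = 2),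
        u ≠ v → Disjoint (univ.filter fun z => u z = 1) (univ.filter fun z => v z = 1) := by
      intro u hu v hv huv
      rw [Finset.disjoint_left]
      intro z hzu hzv
      simp only [mem_filter, mem_univ, true_and] at hzu hzv
      rw [mem_filter] at hu hv
      have hdle : hammingDist u v ≤ 4 := by
        refine dist_le_four (hC.1 u hu.1) (hC.1 v hv.1) (a := a) (b := z) ?_ ?_ ?_ ?_ ?_
        · rintro rfl
          rw [hu.2] at hzu
          exact (by decide : (2:ZMod 4) ≠ 1) hzu
        · rw [hu.2, hv.2]
        · rw [hu.2]; decide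
        · rw [hzu, hzv]
        · rw [hzu]; decide
      have := hC.2 u hu.1 v hv.1 huv
      exact absurd (this.trans hdle) (by norm_num)
    have hsubU : (C.filter (fun u => u a = 2)).biUnion
        (fun u => univ.filter fun z => u z = 1) ⊆ univ.erase a := by
      intro z hz
      obtain ⟨u, hu, hzu⟩ := Finset.mem_biUnion.mp hz
      simp only [mem_filter, mem_univ, true_and] at hzu
      refine Finset.mem_erase.mpr ⟨?_, mem_univ z⟩
      rintro rfl
      rw [mem_filter] at hu
      rw [hu.2] at hzu
      exact (by decide : (2:ZMod 4) ≠ 1) hzu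
    have hbU := Finset.card_biUnion hdisj
    rw [Finset.sum_congr rfl honescard, Finset.sum_const, smul_eq_mul] at hbU
    have hle := Finset.card_le_card hsubU
    rw [hbU] at hle
    have hcard : ((univ : Finset (Fin (2*t))).erase a).card = 2*t - 1 := by
      rw [Finset.card_erase_of_mem (mem_univ a), Finset.card_univ, Fintype.card_fin]
    rw [hcard] at hle
    rw [mul_comm]
    exact hle
  have h1 : ∀ a : Fin (2*t), (C.filter fun u => u a = 2).card ≤ t - 1 := by
    intro a
    have h2 := hfib a
    generalize hx : (C.filter fun u => u a = 2).card = x at h2 ⊢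
    clear hswap hfib hx hC C
    omega
  have hsumle : ∑ a : Fin (2*t), (C.filter fun u => u a = 2).card ≤ 2*t*(t-1) := by
    calc ∑ a : Fin (2*t), (C.filter fun u => u a = 2).card
        ≤ (univ : Finset (Fin (2*t))).card • (t-1) :=
          Finset.sum_le_card_nsmul _ _ _ (fun a _ => h1 a)
      _ = 2*t*(t-1) := by rw [Finset.card_univ, Fintype.card_fin, smul_eq_mul]
  rw [← hswap]
  exact hsumle

end RoomSS

theorem maxCCC_of_superSimpleRoomFrame (t : ℕ) (F : RoomFrame2 t)
    (hss : F.SuperSimple) :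
    maxCCC 4 (2 * t) 5 w211 = 2 * t * (t - 1) ∧
    2 * t * (t - 1) = 2 * t * ((2 * t - 1) / 2) := by
  constructor
  · unfold maxCCC
    apply le_antisymm
    · refine csSup_le ⟨(RoomSS.codeF F).card, RoomSS.codeF F, RoomSS.codeF_isCC F hss, rfl⟩ ?_
      rintro s ⟨C, hC, rfl⟩
      exact RoomSS.card_le_bound C hC
    · refine le_csSup ⟨2*t*(t-1), ?_⟩ ?_
      · rintro s ⟨C, hC, rfl⟩
        exact RoomSS.card_le_bound C hC
      · exact ⟨RoomSS.codeF F, RoomSS.codeF_isCC F hss, RoomSS.codeF_card F⟩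
  · have h : (2*t - 1)/2 = t - 1 := by omega
    rw [h]
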